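/- If G is a finite Cayley integral group, then the order of every non-identity element of G belongs to the set {2, 3, 4, 6}. -/

import Mathlib

open scoped Classical

/-- The adjacency matrix of the undirected Cayley graph `Cay(G,S)`:
the `(a,b)` entry is `1` if `a * b⁻¹ ∈ S` and `0` otherwise. -/
noncomputable def cayleyAdjMatrix {G : Type*} [Group G] [Fintype G] (S : Set G) :
    Matrix G G ℝ :=
  Matrix.of fun a b => if a * b⁻¹ ∈ S then (1 : ℝ) else 0

/-- A finite group `G` is *Cayley integral* if for every subset `S ⊆ G` with `1 ∉ S` and
`S = S⁻¹`, every eigenvalue of the adjacency matrix of the Cayley graph `Cay(G,S)`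
is an integer. -/
def IsCayleyIntegral (G : Type*) [Group G] [Fintype G] : Prop :=
  ∀ S : Set G, (1 : G) ∉ S → (∀ s ∈ S, s⁻¹ ∈ S) →
    ∀ μ ∈ spectrum ℝ (cayleyAdjMatrix S), ∃ k : ℤ, μ = (k : ℝ)

open Real in
/-- Well-definedness of the cosine values along powers of `g`. -/
lemma cos_eq_of_zpow_eq {G : Type*} [Group G] [Fintype G] (g : G) {a b : ℤ}
    (h : g ^ a = g ^ b) :
    Real.cos (2 * π * a / (orderOf g)) = Real.cos (2 * π * b / (orderOf g)) := by
  have hn : (orderOf g : ℤ) ∣ a - b := by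
    rw [orderOf_dvd_iff_zpow_eq_one, zpow_sub, h, mul_inv_cancel]
  obtain ⟨m, hm⟩ := hn
  have hn0 : (orderOf g : ℝ) ≠ 0 := by
    exact_mod_cast (orderOf_pos g).ne'
  have ha : (a : ℝ) = b + (orderOf g : ℝ) * m := by
    have : (a : ℝ) - b = (orderOf g : ℝ) * m := by exact_mod_cast congrArg (Int.cast : ℤ → ℝ) hm
    linarith
  rw [ha]
  have : 2 * π * ((b : ℝ) + (orderOf g : ℝ) * m) / (orderOf g) =
      2 * π * b / (orderOf g) + (m : ℝ) * (2 * π) := by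
    field_simp
  rw [this, Real.cos_add_int_mul_two_pi]

set_option maxHeartbeats 1000000 in
open Real in
/-- `2 cos (2π/n)` is an eigenvalue of the Cayley graph on `{g, g⁻¹}`
when `g` has order `n ≥ 3`. -/
lemma two_cos_mem_spectrum {G : Type*} [Group G] [Fintype G] (g : G)
    (hord : 3 ≤ orderOf g) :
    (2 * Real.cos (2 * π / (orderOf g))) ∈
      spectrum ℝ (cayleyAdjMatrix ({g, g⁻¹} : Set G)) := by
  set n : ℕ := orderOf g with hn
  have hgne : g ≠ g⁻¹ := by
    intro h
    have h2 : g ^ (2 : ℕ) = 1 := by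
      rw [pow_two]; nth_rewrite 2 [h]; rw [mul_inv_cancel]
    have := orderOf_dvd_of_pow_eq_one h2
    have := Nat.le_of_dvd (by norm_num) this
    omega
  set μ : ℝ := 2 * Real.cos (2 * π / n) with hμ
  set v : G → ℝ := fun x => if h : ∃ k : ℤ, g ^ k = x then Real.cos (2 * π * h.choose / n) else 0
    with hv
  have hv_spec : ∀ (x : G) (k : ℤ), g ^ k = x → v x = Real.cos (2 * π * k / n) := by
    intro x k hk
    have h : ∃ k : ℤ, g ^ k = x := ⟨k, hk⟩
    simp only [hv, dif_pos h]
    exact cos_eq_of_zpow_eq g (h.choose_spec.trans hk.symm)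
  have hv_zero : ∀ x : G, (¬ ∃ k : ℤ, g ^ k = x) → v x = 0 := by
    intro x h; simp only [hv, dif_neg h]
  have hv_one : v 1 = 1 := by
    have := hv_spec 1 0 (by simp)
    simpa using this
  have hv_ne : v ≠ 0 := by
    intro h
    have := congrFun h 1
    rw [hv_one] at this
    simp at this
  -- the eigenvector equation
  have hmul : (cayleyAdjMatrix ({g, g⁻¹} : Set G)).mulVec v = μ • v := by
    funext x
    have hne : g⁻¹ * x ≠ g * x := by
      intro h
      exact hgne (mul_right_cancel h).symm
    have step : ∀ y : G, (cayleyAdjMatrix ({g, g⁻¹} : Set G)) x y * v y =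
        (if y = g⁻¹ * x then v y else 0) + (if y = g * x then v y else 0) := by
      intro y
      have e1 : ∀ c : G, x * y⁻¹ = c ↔ y = c⁻¹ * x := by
        intro c
        constructor
        · intro h; rw [← h]; group
        · intro h; rw [h]; group
      have hmem : x * y⁻¹ ∈ ({g, g⁻¹} : Set G) ↔ (y = g⁻¹ * x ∨ y = g * x) := by
        simp only [Set.mem_insert_iff, Set.mem_singleton_iff, e1, inv_inv]
      by_cases h1 : y = g⁻¹ * x
      · subst h1
        simp [cayleyAdjMatrix, hmem, hne]
      · by_cases h2 : y = g * x
        · subst h2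
          simp [cayleyAdjMatrix, hmem, Ne.symm hne]
        · have hnot : x * y⁻¹ ∉ ({g, g⁻¹} : Set G) := fun hh => by
            rcases hmem.mp hh with h | h
            exacts [h1 h, h2 h]
          simp only [cayleyAdjMatrix, Matrix.of_apply, if_neg hnot, if_neg h1, if_neg h2,
            zero_mul, add_zero]
    have hsum : (cayleyAdjMatrix ({g, g⁻¹} : Set G)).mulVec v x = v (g⁻¹ * x) + v (g * x) := by
      rw [Matrix.mulVec, dotProduct]
      rw [Finset.sum_congr rfl (fun y _ => step y), Finset.sum_add_distrib]
      simp [Finset.sum_ite_eq']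
    rw [hsum]
    by_cases hx : ∃ k : ℤ, g ^ k = x
    · obtain ⟨k, hk⟩ := hx
      have h1 := hv_spec (g⁻¹ * x) (k - 1) (by rw [show k - 1 = -1 + k by ring, zpow_add, zpow_neg_one, hk])
      have h2 := hv_spec (g * x) (k + 1) (by rw [show k + 1 = 1 + k by ring, zpow_add, zpow_one, hk])
      have h3 : v x = Real.cos (2 * π * k / n) := hv_spec x k hk
      rw [h1, h2, Pi.smul_apply, h3, smul_eq_mul]
      have e1 : 2 * π * ((k : ℝ) - 1) / n = 2 * π * k / n - 2 * π / n := by ring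
      have e2 : 2 * π * ((k : ℝ) + 1) / n = 2 * π * k / n + 2 * π / n := by ring
      push_cast
      rw [e1, e2, Real.cos_add, Real.cos_sub, hμ]
      ring
    · have h1 : v (g⁻¹ * x) = 0 := by
        apply hv_zero
        rintro ⟨k, hk⟩
        exact hx ⟨1 + k, by rw [zpow_add, zpow_one, hk]; group⟩
      have h2 : v (g * x) = 0 := by
        apply hv_zero
        rintro ⟨k, hk⟩
        exact hx ⟨-1 + k, by rw [zpow_add, zpow_neg_one, hk]; group⟩
      have h3 : v x = 0 := hv_zero x hx
      rw [h1, h2, Pi.smul_apply, h3, smul_eq_mul]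
      ring
  -- conclude spectrum membership
  rw [spectrum.mem_iff]
  rw [Matrix.isUnit_iff_isUnit_det]
  have hdet : (algebraMap ℝ (Matrix G G ℝ) μ - cayleyAdjMatrix ({g, g⁻¹} : Set G)).det = 0 := by
    rw [← Matrix.exists_mulVec_eq_zero_iff]
    refine ⟨v, hv_ne, ?_⟩
    rw [Matrix.sub_mulVec, hmul]
    have : (algebraMap ℝ (Matrix G G ℝ) μ).mulVec v = μ • v := by
      rw [Algebra.algebraMap_eq_smul_one, Matrix.smul_mulVec, Matrix.one_mulVec]
    rw [this, sub_self]
  rw [hdet]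
  exact fun h => by simpa using h.ne_zero

open Real in
/-- In a finite Cayley integral group, every non-identity element has order 2, 3, 4 or 6. -/
theorem orders_of_cayley_integral (G : Type*) [Group G] [Fintype G]
    (hG : IsCayleyIntegral G) (g : G) (hg : g ≠ 1) :
    orderOf g ∈ ({2, 3, 4, 6} : Set ℕ) := by
  set n : ℕ := orderOf g with hn
  have hn2 : 2 ≤ n := by
    have h1 : n ≠ 1 := by
      intro h; exact hg (orderOf_eq_one_iff.mp h)
    have h0 : n ≠ 0 := (orderOf_pos g).ne'
    omega
  by_contra hcon
  simp only [Set.mem_insert_iff, Set.mem_singleton_iff] at hcon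
  push_neg at hcon
  obtain ⟨c2, c3, c4, c6⟩ := hcon
  have hcase : n = 5 ∨ 7 ≤ n := by omega
  have hn5 : 5 ≤ n := by omega
  have hS1 : (1 : G) ∉ ({g, g⁻¹} : Set G) := by
    simp only [Set.mem_insert_iff, Set.mem_singleton_iff]
    push_neg
    exact ⟨hg.symm, fun h => hg (by rw [← inv_inv g, ← h, inv_one])⟩
  have hSinv : ∀ s ∈ ({g, g⁻¹} : Set G), s⁻¹ ∈ ({g, g⁻¹} : Set G) := by
    rintro s (rfl | rfl)
    · right; rfl
    · left; simp
  have hspec := two_cos_mem_spectrum g (by omega)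
  obtain ⟨k, hk⟩ := hG _ hS1 hSinv _ hspec
  rw [← hn] at hk
  have hpi := Real.pi_pos
  have hnR : (5 : ℝ) ≤ n := by exact_mod_cast hn5
  have hnpos : (0 : ℝ) < n := by linarith
  rcases hcase with h5 | h7
  · -- n = 5 : 0 < 2 cos(2π/5) < 1
    rw [h5] at hk
    push_cast at hk
    have hlt : Real.cos (2 * π / 5) < Real.cos (π / 3) :=
      Real.cos_lt_cos_of_nonneg_of_le_pi (by positivity) (by linarith) (by linarith)
    rw [Real.cos_pi_div_three] at hlt
    have hgt : 0 < Real.cos (2 * π / 5) :=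
      Real.cos_pos_of_mem_Ioo ⟨by linarith, by linarith⟩
    have hk0 : (0 : ℝ) < k := by push_cast at hk ⊢; rw [← hk]; linarith
    have hk1 : (k : ℝ) < 1 := by push_cast at hk ⊢; rw [← hk]; linarith
    have : (0 : ℤ) < k := by exact_mod_cast hk0
    have : k < 1 := by exact_mod_cast hk1
    omega
  · -- n ≥ 7 : 1 < 2 cos(2π/n) < 2
    have hnR7 : (7 : ℝ) ≤ n := by exact_mod_cast h7
    have harg1 : 2 * π / n < π / 3 := by
      rw [div_lt_div_iff₀ hnpos (by norm_num)]
      nlinarith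
    have harg0 : 0 < 2 * π / n := by positivity
    have hlt : Real.cos (2 * π / n) < Real.cos 0 :=
      Real.cos_lt_cos_of_nonneg_of_le_pi le_rfl (by nlinarith) harg0
    rw [Real.cos_zero] at hlt
    have hgt : Real.cos (π / 3) < Real.cos (2 * π / n) :=
      Real.cos_lt_cos_of_nonneg_of_le_pi (le_of_lt harg0) (by linarith) harg1
    rw [Real.cos_pi_div_three] at hgt
    have hk1 : (1 : ℝ) < k := by rw [← hk]; linarith
    have hk2 : (k : ℝ) < 2 := by rw [← hk]; linarith
    have : (1 : ℤ) < k := by exact_mod_cast hk1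
    have : k < 2 := by exact_mod_cast hk2
    omega
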